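/- Let g(a) = (-a + 2√(a²-1) + 2·arccsc(a))/(π + a) for a > 1. Then g'(a) = 0 if and only if (π/a)·(a - √(a²-1)) = arcsec(a). -/

import Mathlib

open Real

theorem total_ratio_critical_point (a : ℝ) (ha : 1 < a) :
    deriv (fun a : ℝ =>
        (-a + 2 * Real.sqrt (a ^ 2 - 1) + 2 * Real.arcsin (1 / a)) / (π + a)) a = 0 ↔
      (π / a) * (a - Real.sqrt (a ^ 2 - 1)) = Real.arccos (1 / a) := by
  have ha0 : (0:ℝ) < a := lt_trans one_pos ha
  have hane : a ≠ 0 := ne_of_gt ha0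
  have hsub : (0:ℝ) < a ^ 2 - 1 := by nlinarith
  set s := Real.sqrt (a ^ 2 - 1) with hs_def
  have hs0 : 0 < s := Real.sqrt_pos.mpr hsub
  have hsne : s ≠ 0 := ne_of_gt hs0
  have hs2 : s ^ 2 = a ^ 2 - 1 := Real.sq_sqrt (le_of_lt hsub)
  have hπa : (0:ℝ) < π + a := by positivity
  have hπane : π + a ≠ 0 := ne_of_gt hπa
  -- sqrt (1 - (1/a)^2) = s / a
  have hroot : Real.sqrt (1 - (1/a) ^ 2) = s / a := by
    have h1 : 1 - (1/a) ^ 2 = (a ^ 2 - 1) / a ^ 2 := by field_simp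
    rw [h1, Real.sqrt_div (le_of_lt hsub), Real.sqrt_sq (le_of_lt ha0)]
  -- derivative of sqrt part
  have hsq : HasDerivAt (fun a : ℝ => Real.sqrt (a ^ 2 - 1)) (a / s) a := by
    have h1 : HasDerivAt (fun a : ℝ => a ^ 2 - 1) (2 * a) a := by
      simpa using ((hasDerivAt_pow 2 a).sub_const 1)
    have h2 := (Real.hasDerivAt_sqrt (ne_of_gt hsub)).comp a h1
    refine h2.congr_deriv ?_
    field_simp
    ring
  -- derivative of arcsin part
  have hinv : HasDerivAt (fun a : ℝ => 1 / a) (-(1 / a ^ 2)) a := by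
    simpa using (hasDerivAt_inv hane)
  have harc : HasDerivAt (fun a : ℝ => Real.arcsin (1 / a)) (-(1 / (a * s))) a := by
    have h1 : (1:ℝ)/a ≠ -1 := by
      have : 0 < 1/a := by positivity
      linarith
    have h2 : (1:ℝ)/a ≠ 1 := by
      have : 1/a < 1 := by rw [div_lt_one ha0]; linarith
      linarith
    have h3 := (Real.hasDerivAt_arcsin h1 h2).comp a hinv
    refine h3.congr_deriv ?_
    rw [hroot]
    field_simp
  have hnum : HasDerivAt (fun a : ℝ =>
      -a + 2 * Real.sqrt (a ^ 2 - 1) + 2 * Real.arcsin (1 / a))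
      (-1 + 2 * (a / s) + 2 * (-(1 / (a * s)))) a := by
    exact ((hasDerivAt_id a).neg.add (hsq.const_mul 2)).add (harc.const_mul 2)
  have hden : HasDerivAt (fun a : ℝ => π + a) 1 a := by
    simpa using (hasDerivAt_id a).const_add π
  have hdiv := hnum.div hden hπane
  rw [show deriv (fun a : ℝ => (-a + 2 * Real.sqrt (a ^ 2 - 1) + 2 * Real.arcsin (1 / a)) / (π + a)) a = ((-1 + 2 * (a / s) + 2 * -(1 / (a * s))) * (π + a) - (-a + 2 * Real.sqrt (a ^ 2 - 1) + 2 * Real.arcsin (1 / a)) * 1) / (π + a) ^ 2 from hdiv.deriv]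
  simp only [← hs_def]
  rw [div_eq_zero_iff]
  have hpow : (π + a) ^ 2 ≠ 0 := pow_ne_zero 2 hπane
  rw [or_iff_left hpow]
  rw [Real.arccos_eq_pi_div_two_sub_arcsin]
  set A := Real.arcsin (1 / a) with hA
  constructor
  · intro h
    field_simp at h ⊢
    have key : (π * (a - s) * 2 - (π - 2 * A) * a) * s ^ 2 = 0 := by
      linear_combination (-s) * h - 2 * s * (π + a) * hs2
    rcases mul_eq_zero.mp key with h2 | h2
    · linarith
    · exact absurd h2 (pow_ne_zero 2 hsne)
  · intro h
    field_simp at h ⊢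
    linear_combination (-s) * h - 2 * (π + a) * hs2
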